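/- With the notation of the context, assume r ≥ 2. Then Y_{0,Q,n} = { y ∈ Y_0 : n_α divides y_i − y_j for all 1 ≤ i, j ≤ r }, and, setting n_{α,(r)} := n_α / gcd(n_α, r), the set { n_α(e_i − e_r) : 1 ≤ i ≤ r − 2 } ∪ { n_{α,(r)}(e_1 + ⋯ + e_{r−1} − (r−1)e_r) } is a ℤ-basis of Y_{0,Q,n}. -/

import Mathlib

/-- The symmetric bilinear form on `Y = ℤ^r` attached to an `n`-fold Brylinski–Deligne
cover of `GL_r`: `B(e_i, e_i) = 2𝐩` and `B(e_i, e_j) = 𝐪` for `i ≠ j`. -/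
def BGL (r : ℕ) (p q : ℤ) (x y : Fin r → ℤ) : ℤ :=
  2 * p * (∑ i, x i * y i) + q * ((∑ i, x i) * (∑ i, y i) - ∑ i, x i * y i)

lemma BGL_add_left (r : ℕ) (p q : ℤ) (a b y : Fin r → ℤ) :
    BGL r p q (a + b) y = BGL r p q a y + BGL r p q b y := by
  simp only [BGL, Pi.add_apply, add_mul, Finset.sum_add_distrib]
  ring

lemma BGL_neg_left (r : ℕ) (p q : ℤ) (a y : Fin r → ℤ) :
    BGL r p q (-a) y = -BGL r p q a y := by
  simp only [BGL, Pi.neg_apply, neg_mul, Finset.sum_neg_distrib]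
  ring

/-- The lattice `Y_{Q,n} = {y ∈ Y : B(y, y') ∈ nℤ for all y' ∈ Y}`. -/
def YQnGL (r n : ℕ) (p q : ℤ) : AddSubgroup (Fin r → ℤ) where
  carrier := {y | ∀ y', (n : ℤ) ∣ BGL r p q y y'}
  zero_mem' := by
    intro y'
    simp [BGL]
  add_mem' := by
    intro a b ha hb y'
    rw [BGL_add_left]
    exact dvd_add (ha y') (hb y')
  neg_mem' := by
    intro a ha y'
    rw [BGL_neg_left]
    exact dvd_neg.mpr (ha y')

/-- `n_α = n / gcd(n, Q(α^∨))` with `Q(α^∨) = 2𝐩 - 𝐪`. -/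
def nAlpha (n : ℕ) (p q : ℤ) : ℕ := n / Int.gcd (n : ℤ) (2 * p - q)

/-- The coroot lattice `Y_0 = {y ∈ ℤ^r : y_1 + ⋯ + y_r = 0}` of `GL_r`. -/
def Y0GL (r : ℕ) : AddSubgroup (Fin r → ℤ) where
  carrier := {y | ∑ i, y i = 0}
  zero_mem' := by simp
  add_mem' := by
    intro a b ha hb
    have ha' : ∑ i, a i = 0 := ha
    have hb' : ∑ i, b i = 0 := hb
    show ∑ i, (a + b) i = 0
    simp only [Pi.add_apply, Finset.sum_add_distrib, ha', hb', add_zero]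
  neg_mem' := by
    intro a ha
    have ha' : ∑ i, a i = 0 := ha
    show ∑ i, (-a) i = 0
    simp only [Pi.neg_apply, Finset.sum_neg_distrib, ha', neg_zero]

/-- The lattice `Y_{0,Q,n} = {y ∈ Y_0 : B(y, y') ∈ nℤ for all y' ∈ Y_0}`. -/
def Y0QnGL (r n : ℕ) (p q : ℤ) : AddSubgroup (Fin r → ℤ) where
  carrier := {y | (∑ i, y i = 0) ∧
      ∀ y' : Fin r → ℤ, (∑ i, y' i = 0) → (n : ℤ) ∣ BGL r p q y y'}
  zero_mem' := ⟨by simp, fun y' _ => by simp [BGL]⟩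
  add_mem' := by
    rintro a b ⟨ha0, ha⟩ ⟨hb0, hb⟩
    refine ⟨?_, fun y' hy' => ?_⟩
    · simp only [Pi.add_apply, Finset.sum_add_distrib, ha0, hb0, add_zero]
    · rw [BGL_add_left]
      exact dvd_add (ha y' hy') (hb y' hy')
  neg_mem' := by
    rintro a ⟨ha0, ha⟩
    refine ⟨?_, fun y' hy' => ?_⟩
    · simp only [Pi.neg_apply, Finset.sum_neg_distrib, ha0, neg_zero]
    · rw [BGL_neg_left]
      exact dvd_neg.mpr (ha y' hy')

/-- The family of vectors `n_α(e_i - e_r)` (`1 ≤ i ≤ r-2`) together with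
`n_{α,(r)}(e_1 + ⋯ + e_{r-1} - (r-1)e_r)`. -/
def basisVecGL (r n : ℕ) (p q : ℤ) (hr : 2 ≤ r) (k : Fin (r - 1)) : Fin r → ℤ :=
  if k.1 < r - 2 then
    (nAlpha n p q : ℤ) • (Pi.single (⟨k.1, by have := k.2; omega⟩ : Fin r) 1
      - Pi.single (⟨r - 1, by omega⟩ : Fin r) 1)
  else
    ((nAlpha n p q / Nat.gcd (nAlpha n p q) r : ℕ) : ℤ) •
      (fun j : Fin r => if j.1 < r - 1 then 1 else -((r : ℤ) - 1))


lemma key_dvd (a : ℕ) (ha : 0 < a) (b t : ℤ) :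
    (a : ℤ) ∣ b * t ↔ ((a / Int.gcd (a : ℤ) b : ℕ) : ℤ) ∣ t := by
  set d : ℕ := Int.gcd (a : ℤ) b with hd
  have hd0 : 0 < d := Int.gcd_pos_of_ne_zero_left b (by exact_mod_cast ha.ne')
  have hda : (d : ℤ) ∣ (a : ℤ) := Int.gcd_dvd_left _ _
  have hdb : (d : ℤ) ∣ b := Int.gcd_dvd_right _ _
  have hdan : d ∣ a := by exact_mod_cast hda
  have haa : (a : ℤ) = (d : ℤ) * ((a / d : ℕ) : ℤ) := by
    exact_mod_cast (Nat.mul_div_cancel' hdan).symm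
  have hbb : b = (d : ℤ) * (b / d) := (Int.mul_ediv_cancel' hdb).symm
  have hcast : ((a / d : ℕ) : ℤ) = (a : ℤ) / (d : ℤ) := Int.natCast_ediv a d
  have cop : IsCoprime ((a / d : ℕ) : ℤ) (b / (d : ℤ)) := by
    rw [Int.isCoprime_iff_gcd_eq_one, hcast]
    exact Int.gcd_div_gcd_div_gcd (by exact_mod_cast hd0)
  constructor
  · intro h
    rw [haa, hbb, mul_assoc] at h
    have := (mul_dvd_mul_iff_left (show (d : ℤ) ≠ 0 by exact_mod_cast hd0.ne')).mp h
    exact cop.dvd_of_dvd_mul_left this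
  · rintro ⟨u, hu⟩
    refine ⟨(b / ↑d) * u, ?_⟩
    rw [hu, haa]
    nth_rewrite 1 [hbb]
    ring

lemma BGL_eq_on_Y0 (r : ℕ) (p q : ℤ) (y y' : Fin r → ℤ) (h : ∑ i, y' i = 0) :
    BGL r p q y y' = (2 * p - q) * ∑ i, y i * y' i := by
  simp only [BGL, h, mul_zero, zero_sub]
  ring

lemma char_dvd (r n : ℕ) (hn : 0 < n) (p q : ℤ) (hr : 0 < r) (y : Fin r → ℤ) :
    (∀ y' : Fin r → ℤ, (∑ i, y' i = 0) → (n : ℤ) ∣ BGL r p q y y')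
      ↔ ∀ i j : Fin r, ((nAlpha n p q : ℕ) : ℤ) ∣ y i - y j := by
  have hkey := key_dvd n hn (2 * p - q)
  constructor
  · intro h i j
    rcases eq_or_ne i j with rfl | hij
    · simp
    · set y' : Fin r → ℤ := Pi.single i 1 - Pi.single j 1 with hy'
      have hsum : ∑ k, y' k = 0 := by
        simp [hy', Finset.sum_sub_distrib]
      have hip : ∑ k, y k * y' k = y i - y j := by
        simp [hy', Pi.sub_apply, mul_sub, Finset.sum_sub_distrib, Pi.single_apply,
          mul_ite, mul_one, mul_zero, Finset.sum_ite_eq']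
      have := h y' hsum
      rw [BGL_eq_on_Y0 r p q y y' hsum, hip] at this
      exact (hkey _).mp this
  · intro h y' hy'
    rw [BGL_eq_on_Y0 r p q y y' hy']
    apply (hkey _).mpr
    set i0 : Fin r := ⟨0, hr⟩
    have : ∑ k, y k * y' k = ∑ k, (y k - y i0) * y' k := by
      simp [sub_mul, Finset.sum_sub_distrib, ← Finset.mul_sum, hy']
    rw [this]
    exact Finset.dvd_sum fun k _ => Dvd.dvd.mul_right (h k i0) _

lemma basisVec_val (s n : ℕ) (p q : ℤ) (hr : 2 ≤ s + 2) (k : Fin (s+1)) (j : Fin (s+2)) :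
    basisVecGL (s+2) n p q hr k j =
      if k.1 < s then (nAlpha n p q : ℤ) *
          ((if (j:ℕ) = k.1 then 1 else 0) - (if (j:ℕ) = s+1 then 1 else 0))
      else ((nAlpha n p q / Nat.gcd (nAlpha n p q) (s+2) : ℕ) : ℤ) *
          (if (j:ℕ) < s+1 then 1 else -((s:ℤ)+1)) := by
  rcases Nat.lt_or_ge k.1 s with hk | hk
  · rw [basisVecGL, if_pos (show k.1 < s+2-2 by omega), if_pos hk]
    simp only [Pi.smul_apply, Pi.sub_apply, smul_eq_mul, Pi.single_apply, Fin.ext_iff]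
    norm_num
  · rw [basisVecGL, if_neg (show ¬ k.1 < s+2-2 by omega), if_neg (by omega)]
    simp only [Pi.smul_apply, smul_eq_mul]
    congr 1
    split_ifs with h1 h2 h2 <;> first | rfl | (exfalso; omega) | (push_cast; ring)

lemma sum_indicator_fin (m v : ℕ) (hv : v < m) :
    ∑ x : Fin m, (if (x : ℕ) = v then (1 : ℤ) else 0) = 1 := by
  have h : ∀ x : Fin m, ((x : ℕ) = v) = (x = ⟨v, hv⟩) := fun x => by
    rw [eq_iff_iff, Fin.ext_iff]
  simp_rw [h]
  simp [Finset.sum_ite_eq']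

set_option maxHeartbeats 4000000 in
/-- For `r ≥ 2`:
`Y_{0,Q,n} = {y ∈ Y_0 : n_α ∣ y_i - y_j for all i, j}`, and the family
`{n_α(e_i - e_r) : 1 ≤ i ≤ r-2} ∪ {n_{α,(r)}(e_1 + ⋯ + e_{r-1} - (r-1)e_r)}` is a
ℤ-basis of `Y_{0,Q,n}` (every ℤ-linear combination lies in `Y_{0,Q,n}`, and every element
of `Y_{0,Q,n}` is such a combination in a unique way). -/
theorem stmt13 (r n : ℕ) (hr : 2 ≤ r) (hn : 0 < n) (p q : ℤ) :
    ((Y0QnGL r n p q : AddSubgroup (Fin r → ℤ)) : Set (Fin r → ℤ))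
        = {y | (∑ i, y i = 0) ∧ ∀ i j : Fin r, ((nAlpha n p q : ℕ) : ℤ) ∣ y i - y j} ∧
    (∀ c : Fin (r - 1) → ℤ, (∑ k, c k • basisVecGL r n p q hr k) ∈ Y0QnGL r n p q) ∧
    (∀ y ∈ Y0QnGL r n p q, ∃! c : Fin (r - 1) → ℤ,
        ∑ k, c k • basisVecGL r n p q hr k = y) := by
  obtain ⟨s, rfl⟩ : ∃ s, r = s + 2 := ⟨r - 2, by omega⟩
  have hrpos : 0 < s + 2 := by omega
  set nα : ℕ := nAlpha n p q with hnαdef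
  set g : ℕ := Nat.gcd nα (s + 2) with hgdef
  set n' : ℕ := nα / g with hn'def
  -- positivity
  have hgcd_dvd : Int.gcd (n : ℤ) (2 * p - q) ∣ n := by
    simpa [Int.gcd] using Nat.gcd_dvd_left n (2 * p - q).natAbs
  have hgcd_pos : 0 < Int.gcd (n : ℤ) (2 * p - q) :=
    Int.gcd_pos_of_ne_zero_left _ (by exact_mod_cast hn.ne')
  have hnα_pos : 0 < nα := Nat.div_pos (Nat.le_of_dvd hn hgcd_dvd) hgcd_pos
  have hg_pos : 0 < g := Nat.gcd_pos_of_pos_right _ (by omega)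
  have hn'_pos : 0 < n' := Nat.div_pos (Nat.le_of_dvd hnα_pos (Nat.gcd_dvd_left _ _)) hg_pos
  have hn'r : (nα : ℤ) ∣ (n' : ℤ) * ((s : ℤ) + 2) := by
    have hnat : nα ∣ n' * (s + 2) := by
      refine ⟨(s + 2) / g, ?_⟩
      symm
      have hg1 : n' * g = nα := Nat.div_mul_cancel (Nat.gcd_dvd_left _ _)
      have hg2 : g * ((s + 2) / g) = s + 2 := Nat.mul_div_cancel' (Nat.gcd_dvd_right _ _)
      calc nα * ((s + 2) / g) = n' * g * ((s + 2) / g) := by rw [hg1]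
        _ = n' * (g * ((s + 2) / g)) := by ring
        _ = n' * (s + 2) := by rw [hg2]
    have h2 := Int.natCast_dvd_natCast.mpr hnat
    push_cast at h2
    exact h2
  -- characterization of membership
  have hchar : ∀ y : Fin (s + 2) → ℤ, y ∈ Y0QnGL (s + 2) n p q ↔
      ((∑ i, y i = 0) ∧ ∀ i j : Fin (s + 2), ((nα : ℕ) : ℤ) ∣ y i - y j) := by
    intro y
    constructor
    · intro hy
      have hy' : (∑ i, y i = 0) ∧
          ∀ y' : Fin (s+2) → ℤ, (∑ i, y' i = 0) → (n : ℤ) ∣ BGL (s+2) p q y y' := hy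
      exact ⟨hy'.1, (char_dvd (s+2) n hn p q hrpos y).mp hy'.2⟩
    · rintro ⟨h1, h2⟩
      exact ⟨h1, (char_dvd (s+2) n hn p q hrpos y).mpr h2⟩
  -- Part A
  have partA : ((Y0QnGL (s+2) n p q : AddSubgroup (Fin (s+2) → ℤ)) : Set (Fin (s+2) → ℤ))
      = {y | (∑ i, y i = 0) ∧ ∀ i j : Fin (s+2), ((nAlpha n p q : ℕ) : ℤ) ∣ y i - y j} := by
    ext y
    simpa using hchar y
  -- membership of basis vectors
  have hmem : ∀ k : Fin (s+1), basisVecGL (s+2) n p q hr k ∈ Y0QnGL (s+2) n p q := by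
    intro k
    rw [hchar]
    rcases Nat.lt_or_ge k.1 s with hk | hk
    · constructor
      · rw [Finset.sum_congr rfl (fun j _ => basisVec_val s n p q hr k j)]
        simp only [if_pos hk, Finset.sum_sub_distrib, ← Finset.mul_sum]
        rw [sum_indicator_fin (s+2) k.1 (by omega),
          sum_indicator_fin (s+2) (s+1) (by omega)]
        simp
      · intro i j
        rw [basisVec_val, basisVec_val, if_pos hk, if_pos hk]
        exact dvd_sub (dvd_mul_right _ _) (dvd_mul_right _ _)
    · constructor
      · rw [Finset.sum_congr rfl (fun j _ => basisVec_val s n p q hr k j)]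
        simp only [if_neg (by omega : ¬ k.1 < s), ← Finset.mul_sum]
        have hf0 : ∑ j : Fin (s+2), (if (j : ℕ) < s + 1 then (1 : ℤ) else -((s : ℤ)+1)) = 0 := by
          rw [Fin.sum_univ_castSucc,
            Finset.sum_congr rfl (fun i (_ : i ∈ Finset.univ) =>
              if_pos (show ((i.castSucc : Fin (s+2)) : ℕ) < s + 1 by simpa using i.isLt)),
            if_neg (by simp)]
          simp only [Finset.sum_const, Finset.card_univ, Fintype.card_fin, nsmul_eq_mul,
            mul_one, Fin.val_last, lt_irrefl]
          push_cast
          ring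
        rw [hf0, mul_zero]
      · intro i j
        rw [basisVec_val, basisVec_val, if_neg (by omega : ¬ k.1 < s), if_neg (by omega : ¬ k.1 < s)]
        rw [← mul_sub]
        rcases Nat.lt_or_ge (i : ℕ) (s+1) with hi | hi <;>
          rcases Nat.lt_or_ge (j : ℕ) (s+1) with hj | hj
        · rw [if_pos hi, if_pos hj, sub_self, mul_zero]
          exact dvd_zero _
        · rw [if_pos hi, if_neg (by omega)]
          have : (1 : ℤ) - -((s:ℤ)+1) = (s:ℤ) + 2 := by ring
          rw [this]
          exact hn'r
        · rw [if_neg (by omega), if_pos hj]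
          have : -((s:ℤ)+1) - 1 = -((s:ℤ) + 2) := by ring
          rw [this, mul_neg]
          exact (hn'r).neg_right
        · rw [if_neg (by omega), if_neg (by omega), sub_self, mul_zero]
          exact dvd_zero _
  -- Part B
  have partB : ∀ c : Fin (s+1) → ℤ,
      (∑ k, c k • basisVecGL (s+2) n p q hr k) ∈ Y0QnGL (s+2) n p q := by
    intro c
    exact sum_mem fun k _ => zsmul_mem (hmem k) (c k)
  -- applied sum formula
  have happ : ∀ (c : Fin (s+1) → ℤ) (j : Fin (s+2)),
      (∑ k, c k • basisVecGL (s+2) n p q hr k) j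
        = ∑ k, c k * basisVecGL (s+2) n p q hr k j := by
    intro c j
    rw [Finset.sum_apply]
    simp only [Pi.smul_apply, smul_eq_mul]
  -- coordinate formulas
  have T1 : ∀ (c : Fin (s+1) → ℤ) (j : Fin (s+2)) (hj : (j:ℕ) < s),
      (∑ k, c k • basisVecGL (s+2) n p q hr k) j
        = (nα : ℤ) * c ⟨(j:ℕ), by omega⟩ + (n' : ℤ) * c (Fin.last s) := by
    intro c j hj
    rw [happ, Finset.sum_congr rfl (fun k _ => by rw [basisVec_val s n p q hr k j]),
      Fin.sum_univ_castSucc]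
    have h1 : ∀ i : Fin s,
        c i.castSucc * (if (i.castSucc : Fin (s+1)).1 < s then (nα : ℤ) *
            ((if (j:ℕ) = (i.castSucc : Fin (s+1)).1 then 1 else 0)
              - (if (j:ℕ) = s+1 then 1 else 0))
          else ((nα / g : ℕ) : ℤ) * (if (j:ℕ) < s+1 then 1 else -((s:ℤ)+1)))
        = if i = (⟨(j:ℕ), hj⟩ : Fin s) then c i.castSucc * nα else 0 := by
      intro i
      rw [if_pos (show ((i.castSucc : Fin (s+1)) : ℕ) < s by simpa using i.isLt),
        if_neg (by omega : ¬ (j:ℕ) = s+1)]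
      by_cases hij : i = (⟨(j:ℕ), hj⟩ : Fin s)
      · subst hij
        rw [if_pos rfl, if_pos (by simp)]
        ring
      · rw [if_neg hij, if_neg (by
          simp only [Fin.coe_castSucc]
          intro hcontra
          exact hij (Fin.ext hcontra.symm))]
        ring
    rw [Finset.sum_congr rfl (fun i _ => h1 i), Finset.sum_ite_eq' Finset.univ]
    rw [if_pos (Finset.mem_univ _)]
    rw [if_neg (by simp : ¬ ((Fin.last s : Fin (s+1)) : ℕ) < s),
      if_pos (show (j:ℕ) < s + 1 by omega)]
    simp only [Fin.castSucc_mk, mul_one]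
    ring
  have T2 : ∀ (c : Fin (s+1) → ℤ) (j : Fin (s+2)) (hj : (j:ℕ) = s),
      (∑ k, c k • basisVecGL (s+2) n p q hr k) j = (n' : ℤ) * c (Fin.last s) := by
    intro c j hj
    rw [happ, Finset.sum_congr rfl (fun k _ => by rw [basisVec_val s n p q hr k j]),
      Fin.sum_univ_castSucc]
    have h1 : ∀ i : Fin s,
        c i.castSucc * (if (i.castSucc : Fin (s+1)).1 < s then (nα : ℤ) *
            ((if (j:ℕ) = (i.castSucc : Fin (s+1)).1 then 1 else 0)
              - (if (j:ℕ) = s+1 then 1 else 0))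
          else ((nα / g : ℕ) : ℤ) * (if (j:ℕ) < s+1 then 1 else -((s:ℤ)+1)))
        = 0 := by
      intro i
      rw [if_pos (show ((i.castSucc : Fin (s+1)) : ℕ) < s by simpa using i.isLt),
        if_neg (by omega : ¬ (j:ℕ) = s+1),
        if_neg (by simp only [Fin.coe_castSucc]; omega : ¬ (j:ℕ) = ((i.castSucc : Fin (s+1)) : ℕ))]
      ring
    rw [Finset.sum_congr rfl (fun i _ => h1 i)]
    rw [if_neg (by simp : ¬ ((Fin.last s : Fin (s+1)) : ℕ) < s),
      if_pos (show (j:ℕ) < s + 1 by omega)]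
    simp only [Finset.sum_const_zero, zero_add, mul_one]
    ring
  refine ⟨partA, partB, ?_⟩
  -- Part C
  suffices hsuff : ∀ y ∈ Y0QnGL (s+2) n p q, ∃! c : Fin (s+1) → ℤ,
      (∑ k, c k • basisVecGL (s+2) n p q hr k) = y by exact hsuff
  intro y hy
  obtain ⟨hy0, hyd⟩ := (hchar y).mp hy
  -- divisibility of y ⟨s⟩ by n'
  have hsdvd : (n' : ℤ) ∣ y ⟨s, by omega⟩ := by
    have hr2 : (nα : ℤ) ∣ ((s:ℤ)+2) * y ⟨s, by omega⟩ := by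
      have hd := Finset.dvd_sum (fun j (_ : j ∈ Finset.univ) => hyd ⟨s, by omega⟩ j)
      have hsum : ∑ j, (y ⟨s, by omega⟩ - y j) = ((s:ℤ)+2) * y ⟨s, by omega⟩ := by
        rw [Finset.sum_sub_distrib, hy0, Finset.sum_const, Finset.card_univ]
        simp only [Fintype.card_fin, sub_zero, nsmul_eq_mul]
        push_cast
        ring
      rwa [hsum] at hd
    have := (key_dvd nα hnα_pos ((s:ℤ)+2) _).mp hr2
    have hgcd_eq : Int.gcd (nα : ℤ) ((s:ℤ)+2) = g := by
      have : ((s:ℤ)+2) = ((s+2 : ℕ) : ℤ) := by push_cast; ring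
      rw [this, Int.gcd_natCast_natCast]
    rwa [hgcd_eq] at this
  set c0 : Fin (s+1) → ℤ := fun k =>
    if k.1 < s then (y ⟨k.1, by omega⟩ - y ⟨s, by omega⟩) / (nα : ℤ)
    else y ⟨s, by omega⟩ / (n' : ℤ) with hc0def
  have hc0last : (n' : ℤ) * c0 (Fin.last s) = y ⟨s, by omega⟩ := by
    simp only [hc0def]
    rw [if_neg (show ¬ ((Fin.last s : Fin (s+1)) : ℕ) < s by simp)]
    exact Int.mul_ediv_cancel' hsdvd
  have hc0k : ∀ (j : Fin (s+2)) (hj : (j:ℕ) < s),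
      (nα : ℤ) * c0 ⟨(j:ℕ), by omega⟩ = y j - y ⟨s, by omega⟩ := by
    intro j hj
    simp only [hc0def]
    rw [if_pos (show ((⟨(j:ℕ), by omega⟩ : Fin (s+1)) : ℕ) < s from hj)]
    have hdd : (nα : ℤ) ∣ y ⟨(j:ℕ), by omega⟩ - y ⟨s, by omega⟩ := hyd _ _
    rw [Int.mul_ediv_cancel' hdd]
  -- T c0 = y
  have hTc0 : (∑ k, c0 k • basisVecGL (s+2) n p q hr k) = y := by
    have h01 : ∀ j : Fin (s+2), (j:ℕ) < s + 1 →
        (∑ k, c0 k • basisVecGL (s+2) n p q hr k) j = y j := by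
      intro j hj
      rcases Nat.lt_or_ge (j:ℕ) s with hjs | hjs
      · rw [T1 c0 j hjs, hc0k j hjs, hc0last]
        ring
      · have hjs' : (j:ℕ) = s := by omega
        rw [T2 c0 j hjs', hc0last]
        congr 1
        exact Fin.ext hjs'.symm
    funext j
    rcases Nat.lt_or_ge (j:ℕ) (s+1) with hj | hj
    · exact h01 j hj
    · have hjl : j = Fin.last (s+1) := Fin.ext (by simpa using (by omega : (j:ℕ) = s+1))
      subst hjl
      have e1 : ∑ jj, (∑ k, c0 k • basisVecGL (s+2) n p q hr k) jj = 0 :=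
        ((hchar _).mp (partB c0)).1
      have e2 := hy0
      rw [Fin.sum_univ_castSucc] at e1 e2
      have e3 : ∑ i : Fin (s+1), (∑ k, c0 k • basisVecGL (s+2) n p q hr k) i.castSucc
          = ∑ i : Fin (s+1), y i.castSucc :=
        Finset.sum_congr rfl fun i _ => h01 _ (by simp [i.isLt])
      linarith [e1, e2, e3]
  refine ⟨c0, hTc0, ?_⟩
  intro c hc'
  have hlast : c (Fin.last s) = c0 (Fin.last s) := by
    have e1 := T2 c ⟨s, by omega⟩ rfl
    have e2 := T2 c0 ⟨s, by omega⟩ rfl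
    have u1 : (↑n' : ℤ) * c (Fin.last s) = y ⟨s, by omega⟩ :=
      e1.symm.trans (congrFun hc' ⟨s, by omega⟩)
    have u2 : (↑n' : ℤ) * c0 (Fin.last s) = y ⟨s, by omega⟩ :=
      e2.symm.trans (congrFun hTc0 ⟨s, by omega⟩)
    exact mul_left_cancel₀ (show (n':ℤ) ≠ 0 by exact_mod_cast hn'_pos.ne') (u1.trans u2.symm)
  funext k
  rcases Nat.lt_or_ge (k:ℕ) s with hk | hk
  · have e1 := T1 c ⟨(k:ℕ), by omega⟩ (by simpa using hk)
    have e2 := T1 c0 ⟨(k:ℕ), by omega⟩ (by simpa using hk)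
    have u1 : (↑nα : ℤ) * c ⟨(k:ℕ), by omega⟩ + ↑n' * c (Fin.last s) = y ⟨(k:ℕ), by omega⟩ :=
      e1.symm.trans (congrFun hc' ⟨(k:ℕ), by omega⟩)
    have u2 : (↑nα : ℤ) * c0 ⟨(k:ℕ), by omega⟩ + ↑n' * c0 (Fin.last s) = y ⟨(k:ℕ), by omega⟩ :=
      e2.symm.trans (congrFun hTc0 ⟨(k:ℕ), by omega⟩)
    have e3 := u1.trans u2.symm
    have e4 : (↑nα : ℤ) * c ⟨(k:ℕ), by omega⟩ = ↑nα * c0 ⟨(k:ℕ), by omega⟩ := by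
      linear_combination e3 - (↑n' : ℤ) * hlast
    have e5 := mul_left_cancel₀ (show (nα:ℤ) ≠ 0 by exact_mod_cast hnα_pos.ne') e4
    simpa [Fin.eta] using e5
  · have hkl : k = Fin.last s := Fin.ext (by simp; omega)
    rw [hkl]
    exact hlast
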